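/- Let S ⊆ ℝ^n be a nonempty finite set, X = convexHull(S), and let R be an n×n real matrix with xᵀR x = 0 for every x ∈ X. Assume X* := {x* ∈ X : xᵀR x* ≥ 0 for all x ∈ X} is nonempty. Then there exists a constant c > 0 such that for every x ∈ X: −min_{x' ∈ X} x'ᵀR x ≥ c·‖x − Π_{X*}(x)‖, where Π_{X*}(x) is the Euclidean projection of x onto X* and ‖·‖ the Euclidean norm. -/

import Mathlib

noncomputable section

/-- The bilinear form `xᵀ R y` on Euclidean space. -/
def quadForm {n : ℕ} (R : Matrix (Fin n) (Fin n) ℝ)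
    (x y : EuclideanSpace ℝ (Fin n)) : ℝ :=
  ∑ i, ∑ j, x i * R i j * y j

/-- The set of symmetric Nash equilibria of the symmetric game `(R,R)` over
`convexHull ℝ S`. -/
def symNash {n : ℕ} (S : Set (EuclideanSpace ℝ (Fin n)))
    (R : Matrix (Fin n) (Fin n) ℝ) : Set (EuclideanSpace ℝ (Fin n)) :=
  {xs ∈ convexHull ℝ S | ∀ x ∈ convexHull ℝ S, 0 ≤ quadForm R x xs}

section Helpers

open Finset Set

variable {E : Type*} [AddCommGroup E] [Module ℝ E]


/-- Cutting the convex hull of a finite set by a halfspace yields the convex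
hull of a finite set. -/
lemma polytope_cut (V : Finset E) (ℓ : E → ℝ) (hℓ : IsLinearMap ℝ ℓ) (c : ℝ) :
    ∃ W : Finset E,
      convexHull ℝ (V : Set E) ∩ {x | ℓ x ≤ c} = convexHull ℝ (W : Set E) := by
  classical
  set A : Finset E := V.filter (fun v => ℓ v ≤ c) with hA
  set B : Finset E := V.filter (fun v => ¬ ℓ v ≤ c) with hB
  set p : E → E → E := fun a b => a + ((c - ℓ a) / (ℓ b - ℓ a)) • (b - a) with hp
  set W : Finset E := A ∪ (A ×ˢ B).image (fun ab => p ab.1 ab.2) with hW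
  have hmemA : ∀ a ∈ A, a ∈ V ∧ ℓ a ≤ c := by
    intro a ha; rw [hA, Finset.mem_filter] at ha; exact ha
  have hmemB : ∀ b ∈ B, b ∈ V ∧ c < ℓ b := by
    intro b hb; rw [hB, Finset.mem_filter] at hb; exact ⟨hb.1, lt_of_not_ge hb.2⟩
  have hden : ∀ a ∈ A, ∀ b ∈ B, 0 < ℓ b - ℓ a := by
    intro a ha b hb
    have := (hmemA a ha).2; have := (hmemB b hb).2; linarith
  -- the cut points belong to the target set and have ℓ value c
  have hℓp : ∀ a ∈ A, ∀ b ∈ B, ℓ (p a b) = c := by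
    intro a ha b hb
    have hd := hden a ha b hb
    rw [hp]
    simp only [hℓ.map_add, hℓ.map_smul, smul_eq_mul, hℓ.map_sub]
    field_simp
    ring
  have hkey : ∀ a ∈ A, ∀ b ∈ B,
      (ℓ b - ℓ a) • p a b = (ℓ b - c) • a + (c - ℓ a) • b := by
    intro a ha b hb
    have hd := (hden a ha b hb).ne'
    rw [hp]
    rw [smul_add, smul_smul, mul_div_cancel₀ _ hd]
    module
  constructor
  case w => exact W
  apply Set.Subset.antisymm
  · -- hard direction
    rintro x ⟨hxV, hxc⟩
    rw [Finset.convexHull_eq] at hxV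
    obtain ⟨w, hw0, hw1, hcm⟩ := hxV
    rw [Finset.centerMass_eq_of_sum_1 _ _ hw1] at hcm
    simp only [id_eq] at hcm
    set K : ℝ := ∑ a ∈ A, w a * (c - ℓ a) with hK
    set M : ℝ := ∑ b ∈ B, w b * (ℓ b - c) with hM
    have hsplitw : ∑ a ∈ A, w a + ∑ b ∈ B, w b = 1 := by
      rw [hA, hB, Finset.sum_filter_add_sum_filter_not]; exact hw1
    have hsplitx : (∑ a ∈ A, w a • a) + (∑ b ∈ B, w b • b) = x := by
      rw [hA, hB, Finset.sum_filter_add_sum_filter_not]; exact hcm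
    have hx_le : ∑ v ∈ V, w v * ℓ v ≤ c := by
      have : ℓ x = ∑ v ∈ V, w v * ℓ v := by
        rw [← hcm]
        rw [show ℓ = (IsLinearMap.mk' ℓ hℓ : E →ₗ[ℝ] ℝ) from rfl, map_sum]
        simp [IsLinearMap.mk']
      have hxc' : ℓ x ≤ c := hxc
      rw [this] at hxc'
      exact hxc'
    have hMK : M ≤ K := by
      have h1 : ∑ v ∈ V, w v * ℓ v
          = ∑ a ∈ A, w a * ℓ a + ∑ b ∈ B, w b * ℓ b := by
        rw [hA, hB, Finset.sum_filter_add_sum_filter_not]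
      have h2 : K - M = ∑ a ∈ A, (w a * c - w a * ℓ a)
          - ∑ b ∈ B, (w b * ℓ b - w b * c) := by
        rw [hK, hM]; congr 1 <;> (apply Finset.sum_congr rfl; intros; ring)
      rw [Finset.sum_sub_distrib, Finset.sum_sub_distrib, ← Finset.sum_mul,
        ← Finset.sum_mul] at h2
      have h3 : (∑ a ∈ A, w a) * c + (∑ b ∈ B, w b) * c = c := by
        rw [← add_mul, hsplitw, one_mul]
      linarith [hx_le, h1, h2, h3]
    have hA0 : ∀ a ∈ A, 0 ≤ w a := fun a ha => hw0 a (hmemA a ha).1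
    have hB0 : ∀ b ∈ B, 0 ≤ w b := fun b hb => hw0 b (hmemB b hb).1
    by_cases hBz : ∀ b ∈ B, w b = 0
    · -- all mass on A
      have hsB : ∑ b ∈ B, w b = 0 := Finset.sum_eq_zero hBz
      have hsxB : ∑ b ∈ B, w b • b = 0 :=
        Finset.sum_eq_zero (fun b hb => by rw [hBz b hb, zero_smul])
      have hsum : ∑ a ∈ A, w a = 1 := by linarith
      have hxA : A.centerMass w id = x := by
        rw [Finset.centerMass_eq_of_sum_1 _ _ hsum]
        simp only [id_eq]
        rw [← hsplitx, hsxB, add_zero]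
      rw [← hxA]
      exact Finset.centerMass_mem_convexHull A hA0 (by rw [hsum]; norm_num)
        (fun a ha => by
          rw [Finset.mem_coe, hW]
          exact Finset.mem_union_left _ ha)
    · push_neg at hBz
      obtain ⟨b₀, hb₀B, hb₀⟩ := hBz
      have hMpos : 0 < M := by
        apply Finset.sum_pos'
        · intro b hb
          exact mul_nonneg (hB0 b hb) (by linarith [(hmemB b hb).2])
        · exact ⟨b₀, hb₀B, mul_pos (lt_of_le_of_ne (hB0 b₀ hb₀B) (Ne.symm hb₀))
            (by linarith [(hmemB b₀ hb₀B).2])⟩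
      have hKpos : 0 < K := lt_of_lt_of_le hMpos hMK
      -- build the new convex combination, indexed by A ⊕ (A × B)
      set t : Finset (E ⊕ E × E) := A.disjSum (A ×ˢ B) with ht
      set w' : E ⊕ E × E → ℝ :=
        Sum.elim (fun a => w a * (K - M))
          (fun ab => w ab.1 * w ab.2 * (ℓ ab.2 - ℓ ab.1)) with hw'
      set z : E ⊕ E × E → E := Sum.elim id (fun ab => p ab.1 ab.2) with hz
      have hw'0 : ∀ i ∈ t, 0 ≤ w' i := by
        rintro (a | ab) hi
        · rw [ht, Finset.inl_mem_disjSum] at hi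
          exact mul_nonneg (hA0 a hi) (by linarith)
        · rw [ht, Finset.inr_mem_disjSum, Finset.mem_product] at hi
          exact mul_nonneg (mul_nonneg (hA0 _ hi.1) (hB0 _ hi.2))
            (le_of_lt (hden _ hi.1 _ hi.2))
      have hsum' : ∑ i ∈ t, w' i = K := by
        rw [ht, hw', Finset.sum_disjSum]
        simp only [Sum.elim_inl, Sum.elim_inr]
        rw [Finset.sum_product]
        have hin : ∀ a ∈ A, ∑ b ∈ B, w a * w b * (ℓ b - ℓ a)
            = w a * M + (w a * (c - ℓ a)) * ∑ b ∈ B, w b := by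
          intro a ha
          rw [hM, Finset.mul_sum, Finset.mul_sum, ← Finset.sum_add_distrib]
          apply Finset.sum_congr rfl
          intro b hb; ring
        rw [Finset.sum_congr rfl hin, Finset.sum_add_distrib, ← Finset.sum_mul,
          ← Finset.sum_mul, ← Finset.sum_mul, ← hK]
        linear_combination K * hsplitw
      have hvec : ∑ i ∈ t, w' i • z i = K • x := by
        rw [ht, hw', hz, Finset.sum_disjSum]
        simp only [Sum.elim_inl, Sum.elim_inr, id_eq]
        rw [Finset.sum_product]
        have hin : ∀ a ∈ A, ∑ b ∈ B, (w a * w b * (ℓ b - ℓ a)) • p a b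
            = (w a * M) • a + (w a * (c - ℓ a)) • ∑ b ∈ B, w b • b := by
          intro a ha
          have : ∀ b ∈ B, (w a * w b * (ℓ b - ℓ a)) • p a b
              = (w a * (w b * (ℓ b - c))) • a + (w a * (c - ℓ a)) • (w b • b) := by
            intro b hb
            have h1 : (w a * w b * (ℓ b - ℓ a)) • p a b
                = (w a * w b) • ((ℓ b - ℓ a) • p a b) := by
              rw [smul_smul]
            rw [h1, hkey a ha b hb, smul_add]
            simp only [smul_smul]
            congr 1 <;> (congr 1; ring)
          rw [Finset.sum_congr rfl this, Finset.sum_add_distrib]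
          congr 1
          · rw [← Finset.sum_smul, hM, Finset.mul_sum]
          · rw [Finset.smul_sum]
        rw [Finset.sum_congr rfl hin, Finset.sum_add_distrib]
        have e1 : ∑ a ∈ A, (w a * (K - M)) • a
            = (K - M) • ∑ a ∈ A, w a • a := by
          rw [Finset.smul_sum]
          apply Finset.sum_congr rfl
          intro a ha; rw [smul_smul]; congr 1; ring
        have e2 : ∑ a ∈ A, (w a * M) • a = M • ∑ a ∈ A, w a • a := by
          rw [Finset.smul_sum]
          apply Finset.sum_congr rfl
          intro a ha; rw [smul_smul]; congr 1; ring
        have e3 : ∑ a ∈ A, (w a * (c - ℓ a)) • (∑ b ∈ B, w b • b)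
            = K • ∑ b ∈ B, w b • b := by
          rw [← Finset.sum_smul, ← hK]
        rw [e1, e2, e3, ← hsplitx]
        rw [smul_add, sub_smul]
        abel
      have hmemW : ∀ i ∈ t, z i ∈ (W : Set E) := by
        rintro (a | ab) hi
        · rw [ht, Finset.inl_mem_disjSum] at hi
          rw [hz]; simp only [Sum.elim_inl, id_eq]
          rw [Finset.mem_coe, hW]
          exact Finset.mem_union_left _ hi
        · rw [ht, Finset.inr_mem_disjSum] at hi
          rw [hz]; simp only [Sum.elim_inr]
          rw [Finset.mem_coe, hW]
          apply Finset.mem_union_right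
          exact Finset.mem_image.2 ⟨ab, hi, rfl⟩
      have hxcm : t.centerMass w' z = x := by
        rw [Finset.centerMass, hsum', hvec, smul_smul,
          inv_mul_cancel₀ hKpos.ne', one_smul]
      rw [← hxcm]
      exact Finset.centerMass_mem_convexHull t hw'0 (by rw [hsum']; exact hKpos)
        hmemW
  · -- easy direction
    apply convexHull_min
    · intro y hy
      rw [Finset.mem_coe, hW, Finset.mem_union] at hy
      rcases hy with hy | hy
      · obtain ⟨hyV, hyc⟩ := hmemA y hy
        exact ⟨subset_convexHull ℝ _ hyV, hyc⟩
      · rw [Finset.mem_image] at hy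
        obtain ⟨ab, hab, rfl⟩ := hy
        rw [Finset.mem_product] at hab
        obtain ⟨ha, hb⟩ := hab
        have hd := hden _ ha _ hb
        have ht0 : (0:ℝ) ≤ (c - ℓ ab.1) / (ℓ ab.2 - ℓ ab.1) :=
          div_nonneg (by linarith [(hmemA _ ha).2]) hd.le
        have ht1 : (c - ℓ ab.1) / (ℓ ab.2 - ℓ ab.1) ≤ 1 := by
          rw [div_le_one hd]
          linarith [(hmemB _ hb).2]
        constructor
        · exact (convex_convexHull ℝ _).add_smul_sub_mem
            (subset_convexHull ℝ _ (hmemA _ ha).1)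
            (subset_convexHull ℝ _ (hmemB _ hb).1) ⟨ht0, ht1⟩
        · rw [Set.mem_setOf_eq, hℓp _ ha _ hb]
    · exact (convex_convexHull ℝ _).inter (convex_halfSpace_le hℓ c)

/-- Cutting the convex hull of a finite set by finitely many halfspaces yields
the convex hull of a finite set. -/
lemma polytope_cuts {ι : Type*} (V : Finset E) (G : Finset ι) (ℓ : ι → E → ℝ)
    (hℓ : ∀ g, IsLinearMap ℝ (ℓ g)) :
    ∃ W : Finset E,
      convexHull ℝ (V : Set E) ∩ {x | ∀ g ∈ G, ℓ g x ≤ 0}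
        = convexHull ℝ (W : Set E) := by
  classical
  induction G using Finset.induction_on with
  | empty => exact ⟨V, by simp⟩
  | insert a G' h ih =>
      obtain ⟨W', hW'⟩ := ih
      obtain ⟨W, hW⟩ := polytope_cut W' (ℓ a) (hℓ a) 0
      refine ⟨W, ?_⟩
      rw [← hW, ← hW']
      ext x
      simp only [Set.mem_inter_iff, Set.mem_setOf_eq, Finset.mem_insert]
      constructor
      · rintro ⟨h1, h2⟩
        exact ⟨⟨h1, fun g hg => h2 g (Or.inr hg)⟩, h2 a (Or.inl rfl)⟩
      · rintro ⟨⟨h1, h2⟩, h3⟩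
        refine ⟨h1, fun g hg => ?_⟩
        rcases hg with rfl | hg
        · exact h3
        · exact h2 g hg

/-- A linear function, as `ConvexOn` on `univ`. -/
lemma IsLinearMap.convexOn' {f : E → ℝ} (hf : IsLinearMap ℝ f) :
    ConvexOn ℝ (Set.univ : Set E) f := by
  refine ⟨convex_univ, fun x _ y _ a b _ _ _ => ?_⟩
  rw [hf.map_add, hf.map_smul, hf.map_smul, smul_eq_mul, smul_eq_mul]

/-- A linear function, as `ConcaveOn` on `univ`. -/
lemma IsLinearMap.concaveOn' {f : E → ℝ} (hf : IsLinearMap ℝ f) :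
    ConcaveOn ℝ (Set.univ : Set E) f := by
  refine ⟨convex_univ, fun x _ y _ a b _ _ _ => ?_⟩
  rw [hf.map_add, hf.map_smul, hf.map_smul, smul_eq_mul, smul_eq_mul]

/-- A linear function on the convex hull of a nonempty finite set is at least
the minimum of its values on the set. -/
lemma inf'_le_of_mem_convexHull (V : Finset E) (hV : V.Nonempty) {f : E → ℝ}
    (hf : IsLinearMap ℝ f) {x : E} (hx : x ∈ convexHull ℝ (V : Set E)) :
    V.inf' hV f ≤ f x := by
  obtain ⟨y, hy, hyx⟩ := hf.concaveOn'.exists_le_of_mem_convexHull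
    (Set.subset_univ _) hx
  exact le_trans (Finset.inf'_le f hy) hyx

/-- The infimum of a linear function over the convex hull of a nonempty finite
set equals its minimum over the set. -/
lemma sInf_image_convexHull (V : Finset E) (hV : V.Nonempty) {f : E → ℝ}
    (hf : IsLinearMap ℝ f) :
    sInf (f '' (convexHull ℝ (V : Set E))) = V.inf' hV f := by
  apply le_antisymm
  · obtain ⟨s₀, hs₀, hs₀eq⟩ := Finset.exists_mem_eq_inf' hV f
    apply csInf_le
    · exact ⟨V.inf' hV f, fun y ⟨v, hv, hvy⟩ =>
        hvy ▸ inf'_le_of_mem_convexHull V hV hf hv⟩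
    · exact ⟨s₀, subset_convexHull ℝ _ hs₀, hs₀eq.symm⟩
  · apply le_csInf
    · obtain ⟨s₀, hs₀⟩ := hV
      exact ⟨f s₀, s₀, subset_convexHull ℝ _ hs₀, rfl⟩
    · rintro y ⟨v, hv, rfl⟩
      exact inf'_le_of_mem_convexHull V hV hf hv

section Normed

variable {F : Type*} [NormedAddCommGroup F] [NormedSpace ℝ F]

/-- The distance to a nonempty convex set is a convex function. -/
lemma convexOn_infDist' {s : Set F} (hs : s.Nonempty) (hconv : Convex ℝ s) :
    ConvexOn ℝ (Set.univ : Set F) (fun y => Metric.infDist y s) := by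
  refine ⟨convex_univ, fun x _ y _ a b ha hb hab => ?_⟩
  refine le_of_forall_pos_le_add fun ε hε => ?_
  obtain ⟨q1, hq1, hdq1⟩ := (Metric.infDist_lt_iff hs).1
    (show Metric.infDist x s < Metric.infDist x s + ε by linarith)
  obtain ⟨q2, hq2, hdq2⟩ := (Metric.infDist_lt_iff hs).1
    (show Metric.infDist y s < Metric.infDist y s + ε by linarith)
  have hqmem : a • q1 + b • q2 ∈ s := hconv hq1 hq2 ha hb hab
  have h1 : Metric.infDist (a • x + b • y) s ≤ dist (a • x + b • y) (a • q1 + b • q2) :=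
    Metric.infDist_le_dist_of_mem hqmem
  have h2 : dist (a • x + b • y) (a • q1 + b • q2)
      ≤ dist (a • x) (a • q1) + dist (b • y) (b • q2) := dist_add_add_le _ _ _ _
  rw [dist_smul₀, dist_smul₀, Real.norm_of_nonneg ha, Real.norm_of_nonneg hb] at h2
  have := mul_le_mul_of_nonneg_left hdq1.le ha
  have := mul_le_mul_of_nonneg_left hdq2.le hb
  simp only [smul_eq_mul]
  nlinarith [h1, h2]

end Normed


end Helpers

section QuadFormLemmas

lemma quadForm_linear_left {n : ℕ} (R : Matrix (Fin n) (Fin n) ℝ)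
    (y : EuclideanSpace ℝ (Fin n)) :
    IsLinearMap ℝ (fun x => quadForm R x y) := by
  constructor
  · intro u v
    simp only [quadForm, PiLp.add_apply, add_mul, Finset.sum_add_distrib]
  · intro c u
    simp only [quadForm, PiLp.smul_apply, smul_eq_mul, Finset.mul_sum, mul_assoc]

lemma quadForm_linear_right {n : ℕ} (R : Matrix (Fin n) (Fin n) ℝ)
    (s : EuclideanSpace ℝ (Fin n)) :
    IsLinearMap ℝ (fun x => quadForm R s x) := by
  constructor
  · intro u v
    simp only [quadForm, PiLp.add_apply, mul_add, Finset.sum_add_distrib]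
  · intro c u
    simp only [quadForm, PiLp.smul_apply, smul_eq_mul, Finset.mul_sum]
    congr 1; ext i; congr 1; ext j; ring

end QuadFormLemmas

/-- Error bound: there is a constant `c > 0` such that for every `x` in the
polytope `X = convexHull ℝ S`, `−min_{x' ∈ X} x'ᵀ R x ≥ c·‖x − Π_{X*}(x)‖`,
where `Π_{X*}(x)` is the Euclidean projection of `x` onto the set `X*` of
symmetric Nash equilibria. -/
theorem error_bound {n : ℕ} (S : Set (EuclideanSpace ℝ (Fin n)))
    (hSfin : S.Finite) (hSne : S.Nonempty) (R : Matrix (Fin n) (Fin n) ℝ)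
    (hzero : ∀ x ∈ convexHull ℝ S, quadForm R x x = 0)
    (hne : (symNash S R).Nonempty) :
    ∃ c > 0, ∀ x ∈ convexHull ℝ S,
      ∀ p ∈ symNash S R, (∀ q ∈ symNash S R, ‖x - p‖ ≤ ‖x - q‖) →
        - sInf ((fun x' => quadForm R x' x) '' (convexHull ℝ S)) ≥ c * ‖x - p‖ := by
  classical
  set St : Finset (EuclideanSpace ℝ (Fin n)) := hSfin.toFinset with hSt'
  have hStco : (St : Set (EuclideanSpace ℝ (Fin n))) = S := hSfin.coe_toFinset
  have hSt : St.Nonempty := by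
    rw [← hStco] at hSne
    exact Finset.coe_nonempty.mp hSne
  have hXeq : convexHull ℝ S
      = convexHull ℝ (St : Set (EuclideanSpace ℝ (Fin n))) := by rw [hStco]
  set m : EuclideanSpace ℝ (Fin n) → ℝ :=
    fun x => St.inf' hSt (fun s => quadForm R s x) with hm
  have hsInfm : ∀ x, sInf ((fun x' => quadForm R x' x) '' (convexHull ℝ S)) = m x := by
    intro x
    rw [hXeq]
    exact sInf_image_convexHull St hSt (quadForm_linear_left R x)
  have hm_le : ∀ x, ∀ s ∈ St, m x ≤ quadForm R s x :=
    fun x s hs => Finset.inf'_le _ hs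
  have hm_nonpos : ∀ x ∈ convexHull ℝ S, m x ≤ 0 := by
    intro x hx
    have hx' : x ∈ convexHull ℝ (St : Set (EuclideanSpace ℝ (Fin n))) := by
      rwa [← hXeq]
    obtain ⟨s, hs, hle⟩ :=
      (quadForm_linear_left R x).concaveOn'.exists_le_of_mem_convexHull
        (Set.subset_univ _) hx'
    rw [hzero x hx] at hle
    exact le_trans (hm_le x s (Finset.mem_coe.1 hs)) hle
  have hm_zero_mem : ∀ v ∈ convexHull ℝ S, m v = 0 → v ∈ symNash S R := by
    intro v hv hmv
    refine ⟨hv, ?_⟩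
    intro x hx
    have hsubset : convexHull ℝ S ⊆ {x | 0 ≤ quadForm R x v} := by
      apply convexHull_min
      · intro s hs
        have hsSt : s ∈ St := by
          rw [← hStco] at hs
          exact Finset.mem_coe.1 hs
        have h := hm_le v s hsSt
        rw [hmv] at h
        exact h
      · exact convex_halfSpace_ge (quadForm_linear_left R v) 0
    exact hsubset hx
  set N := symNash S R with hN
  have hNconv : Convex ℝ N := by
    intro u hu v hv a b ha hb hab
    refine ⟨(convex_convexHull ℝ S) hu.1 hv.1 ha hb hab, ?_⟩
    intro x hx
    have h1 := hu.2 x hx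
    have h2 := hv.2 x hx
    set L : EuclideanSpace ℝ (Fin n) →ₗ[ℝ] ℝ :=
      IsLinearMap.mk' _ (quadForm_linear_right R x) with hL
    have h1' : (0:ℝ) ≤ L u := h1
    have h2' : (0:ℝ) ≤ L v := h2
    show (0:ℝ) ≤ L (a • u + b • v)
    rw [map_add, map_smul, map_smul, smul_eq_mul, smul_eq_mul]
    nlinarith
  set φ : EuclideanSpace ℝ (Fin n) → ℝ := fun y => Metric.infDist y N with hφ
  have hφconv : ConvexOn ℝ Set.univ φ := convexOn_infDist' hne hNconv
  have hφ0 : ∀ y, 0 ≤ φ y := fun y => Metric.infDist_nonneg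
  have hφN : ∀ y ∈ N, φ y = 0 := fun y hy => Metric.infDist_zero_of_mem hy
  -- the pieces of the polytope on which `m` is linear
  have hlinC : ∀ α g : EuclideanSpace ℝ (Fin n),
      IsLinearMap ℝ (fun x => quadForm R α x - quadForm R g x) := by
    intro α g
    set Lα : EuclideanSpace ℝ (Fin n) →ₗ[ℝ] ℝ :=
      IsLinearMap.mk' _ (quadForm_linear_right R α) with hLα
    set Lg : EuclideanSpace ℝ (Fin n) →ₗ[ℝ] ℝ :=
      IsLinearMap.mk' _ (quadForm_linear_right R g) with hLg
    exact (Lα - Lg).isLinear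
  have hcuts : ∀ α : EuclideanSpace ℝ (Fin n),
      ∃ W : Finset (EuclideanSpace ℝ (Fin n)),
        convexHull ℝ (St : Set (EuclideanSpace ℝ (Fin n)))
            ∩ {x | ∀ g ∈ St, quadForm R α x - quadForm R g x ≤ 0}
          = convexHull ℝ (W : Set (EuclideanSpace ℝ (Fin n))) :=
    fun α => polytope_cuts St St
      (fun g x => quadForm R α x - quadForm R g x) (fun g => hlinC α g)
  choose Wf hWf using hcuts
  have hWsub : ∀ α, (Wf α : Set (EuclideanSpace ℝ (Fin n)))
      ⊆ convexHull ℝ (St : Set (EuclideanSpace ℝ (Fin n)))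
          ∩ {x | ∀ g ∈ St, quadForm R α x - quadForm R g x ≤ 0} := by
    intro α v hv
    have h : v ∈ convexHull ℝ (Wf α : Set (EuclideanSpace ℝ (Fin n))) :=
      subset_convexHull ℝ _ hv
    rwa [← hWf α] at h
  have hUm : ∀ α ∈ St, ∀ v ∈ Wf α,
      m v = quadForm R α v ∧ v ∈ convexHull ℝ S := by
    intro α hα v hv
    obtain ⟨hvX, hvP⟩ := hWsub α (Finset.mem_coe.2 hv)
    constructor
    · apply le_antisymm (hm_le v α hα)
      apply Finset.le_inf'
      intro g hg
      have := hvP g hg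
      linarith
    · rwa [hXeq]
  set U : Finset (EuclideanSpace ℝ (Fin n)) := St.biUnion Wf with hU
  set U' : Finset (EuclideanSpace ℝ (Fin n)) :=
    U.filter (fun v => 0 < φ v) with hU'
  set c : ℝ :=
    if h : U'.Nonempty then min 1 (U'.inf' h (fun v => -(m v) / φ v)) else 1
    with hc
  have hcpos : 0 < c := by
    rw [hc]
    split_ifs with h
    · apply lt_min one_pos
      rw [Finset.lt_inf'_iff]
      intro v hv
      rw [hU', Finset.mem_filter] at hv
      obtain ⟨hvU, hφv⟩ := hv
      obtain ⟨α, hα, hvW⟩ := Finset.mem_biUnion.1 hvU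
      obtain ⟨hmv, hvX⟩ := hUm α hα v hvW
      have hmle := hm_nonpos v hvX
      have hmne : m v ≠ 0 := by
        intro h0
        have := hφN v (hm_zero_mem v hvX h0)
        linarith
      exact div_pos (by cases lt_or_eq_of_le hmle with
        | inl h' => linarith
        | inr h' => exact absurd h' hmne) hφv
    · exact one_pos
  have hcφ : ∀ v ∈ U, c * φ v ≤ -(m v) := by
    intro v hv
    obtain ⟨α, hα, hvW⟩ := Finset.mem_biUnion.1 hv
    obtain ⟨hmv, hvX⟩ := hUm α hα v hvW
    rcases eq_or_lt_of_le (hφ0 v) with h | h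
    · rw [← h, mul_zero]
      linarith [hm_nonpos v hvX]
    · have hvU' : v ∈ U' := by
        rw [hU', Finset.mem_filter]
        exact ⟨hv, h⟩
      have hne' : U'.Nonempty := ⟨v, hvU'⟩
      have hcle : c ≤ -(m v) / φ v := by
        rw [hc, dif_pos hne']
        exact le_trans (min_le_right _ _) (Finset.inf'_le _ hvU')
      exact (le_div_iff₀ h).1 hcle
  refine ⟨c, hcpos, ?_⟩
  intro x hx p hp hpmin
  have hx' : x ∈ convexHull ℝ (St : Set (EuclideanSpace ℝ (Fin n))) := by
    rwa [← hXeq]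
  obtain ⟨α, hα, hαmin⟩ := Finset.exists_min_image St (fun s => quadForm R s x) hSt
  have hmx : m x = quadForm R α x :=
    le_antisymm (hm_le x α hα) (Finset.le_inf' _ _ fun g hg => hαmin g hg)
  have hxW : x ∈ convexHull ℝ (Wf α : Set (EuclideanSpace ℝ (Fin n))) := by
    rw [← hWf α]
    exact ⟨hx', fun g hg => sub_nonpos.2 (hαmin g hg)⟩
  have hψ : ConvexOn ℝ Set.univ (fun y => c * φ y + quadForm R α y) := by
    apply ConvexOn.add
    · have h := hφconv.smul hcpos.le
      simpa [Pi.smul_apply, smul_eq_mul] using h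
    · exact (quadForm_linear_right R α).convexOn'
  obtain ⟨v, hv, hxv⟩ :=
    hψ.exists_ge_of_mem_convexHull (Set.subset_univ _) hxW
  have hvW : v ∈ Wf α := Finset.mem_coe.1 hv
  have hvU : v ∈ U := Finset.mem_biUnion.2 ⟨α, hα, hvW⟩
  obtain ⟨hmv, hvX⟩ := hUm α hα v hvW
  have h1 : c * φ v + quadForm R α v ≤ 0 := by
    have := hcφ v hvU
    linarith [hmv ▸ this]
  have h2 : c * φ x + quadForm R α x ≤ 0 := by
    calc c * φ x + quadForm R α x ≤ c * φ v + quadForm R α v := hxv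
      _ ≤ 0 := h1
  have hφx : φ x = ‖x - p‖ := by
    apply le_antisymm
    · have h := Metric.infDist_le_dist_of_mem (x := x) hp
      rwa [dist_eq_norm] at h
    · by_contra hlt
      push_neg at hlt
      obtain ⟨q, hq, hdq⟩ := (Metric.infDist_lt_iff hne).1 hlt
      rw [dist_eq_norm] at hdq
      linarith [hpmin q hq]
  rw [ge_iff_le, hsInfm x, ← hφx]
  linarith [h2, hmx]

end
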